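/- Let G be a group generated as a monoid by a finite set S, and let H ≤ G be a subgroup of finite index L. Then for every n ∈ ℕ, the number of elements of G of S-word-length at most n is at most L times the number of elements of H of S-word-length at most n + L − 1. -/
import Mathlib

/-- `lengthLE S g n` : the element `g` is a product of at most `n` elements of `S`,
i.e. its word length with respect to the monoid generating set `S` is at most `n`. -/
def lengthLE {G : Type} [Group G] (S : Set G) (g : G) (n : ℕ) : Prop :=
  ∃ l : List G, l.length ≤ n ∧ (∀ x ∈ l, x ∈ S) ∧ l.prod = g

private lemma shorten {G : Type} [Group G] (S : Set G) (H : Subgroup G) [Finite (G ⧸ H)]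
    (C : G ⧸ H) :
    ∀ (k : ℕ) (l : List G), l.length ≤ k → (∀ x ∈ l, x ∈ S) →
      l.prod • C = ((1 : G) : G ⧸ H) →
      ∃ l' : List G, l'.length ≤ H.index - 1 ∧ (∀ x ∈ l', x ∈ S) ∧
        l'.prod • C = ((1 : G) : G ⧸ H) := by
  intro k
  induction k with
  | zero => intro l hl hS hact; exact ⟨l, by omega, hS, hact⟩
  | succ k ih =>
    intro l hl hS hact
    by_cases hlen : l.length ≤ H.index - 1
    · exact ⟨l, hlen, hS, hact⟩
    · have hidx : H.index = Nat.card (G ⧸ H) := rfl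
      have hne : Nat.card (G ⧸ H) ≠ 0 := Nat.card_pos.ne'
      have hcard : Nat.card (G ⧸ H) < l.length + 1 := by omega
      haveI : Fintype (G ⧸ H) := Fintype.ofFinite _
      obtain ⟨i, j, hij_ne, hij⟩ :=
        Fintype.exists_ne_map_eq_of_card_lt
          (fun m : Fin (l.length + 1) => (l.drop m).prod • C)
          (by simpa [Nat.card_eq_fintype_card] using hcard)
      wlog hlt : (i : ℕ) < (j : ℕ) generalizing i j
      · refine this j i hij_ne.symm hij.symm ?_
        rcases Nat.lt_or_ge (i : ℕ) (j : ℕ) with h | h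
        · exact absurd h hlt
        · rcases Nat.eq_or_lt_of_le h with h' | h'
          · exact absurd (Fin.ext h'.symm) hij_ne
          · exact h'
      have key : (l.take i ++ l.drop j).prod • C = l.prod • C := by
        rw [List.prod_append, mul_smul, ← hij, ← mul_smul, ← List.prod_append,
          List.take_append_drop]
      refine ih (l.take i ++ l.drop j) ?_ ?_ (by rw [key]; exact hact)
      · have hj : (j : ℕ) ≤ l.length := by omega
        simp only [List.length_append, List.length_take, List.length_drop]
        omega
      · intro x hx
        rcases List.mem_append.mp hx with h | h
        · exact hS x (List.mem_of_mem_take h)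
        · exact hS x (List.mem_of_mem_drop h)

/-- If `H` is a subgroup of finite index `L` in a group `G` generated as a monoid by a
finite set `S`, then the number of elements of `G` of length at most `n` is at most
`L` times the number of elements of `H` of length at most `n + L - 1`. -/
theorem growth_le_index_mul_subgroup_growth (G : Type) [Group G] (S : Set G)
    (hS : S.Finite) (hgen : Submonoid.closure S = ⊤)
    (H : Subgroup G) (hH : H.FiniteIndex) (n : ℕ) :
    Set.ncard {g : G | lengthLE S g n} ≤
      H.index * Set.ncard {g : G | g ∈ H ∧ lengthLE S g (n + H.index - 1)} := by
  classical
  have hL : H.index ≠ 0 := hH.index_ne_zero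
  set L := H.index with hLdef
  have hword : ∀ C : G ⧸ H, ∃ l : List G, l.length ≤ L - 1 ∧ (∀ x ∈ l, x ∈ S) ∧
      l.prod • C = ((1 : G) : G ⧸ H) := by
    intro C
    obtain ⟨g, rfl⟩ := QuotientGroup.mk_surjective C
    have hg : g⁻¹ ∈ Submonoid.closure S := by rw [hgen]; trivial
    obtain ⟨l, hlS, hlprod⟩ := Submonoid.exists_list_of_mem_closure hg
    have hact : l.prod • ((g : G ⧸ H)) = ((1 : G) : G ⧸ H) := by
      rw [MulAction.Quotient.smul_mk, hlprod, smul_eq_mul, inv_mul_cancel]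
    obtain ⟨l', h1, h2, h3⟩ := shorten S H _ l.length l le_rfl hlS hact
    exact ⟨l', h1, h2, h3⟩
  choose u hu1 hu2 hu3 using hword
  set A : Set G := {g : G | lengthLE S g n} with hA
  set B : Set G := {g : G | g ∈ H ∧ lengthLE S g (n + L - 1)} with hB
  set f : G → (G ⧸ H) × G := fun g => (QuotientGroup.mk g, (u (QuotientGroup.mk g)).prod * g)
    with hf
  have hinj : Function.Injective f := by
    intro a b hab
    have h1 : (QuotientGroup.mk a : G ⧸ H) = QuotientGroup.mk b := congrArg Prod.fst hab
    have h2 := congrArg Prod.snd hab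
    simp only [hf, h1] at h2
    exact mul_left_cancel h2
  have hsub : f '' A ⊆ (Set.univ : Set (G ⧸ H)) ×ˢ B := by
    rintro ⟨C, h⟩ ⟨g, hg, heq⟩
    obtain ⟨lg, hlg1, hlg2, hlg3⟩ := hg
    obtain ⟨rfl, rfl⟩ : C = QuotientGroup.mk g ∧ h = (u (QuotientGroup.mk g)).prod * g := by
      constructor
      · exact (congrArg Prod.fst heq).symm
      · exact (congrArg Prod.snd heq).symm
    refine ⟨trivial, ?_, ?_⟩
    · have h3 := hu3 (QuotientGroup.mk g)
      rw [MulAction.Quotient.smul_mk, QuotientGroup.eq] at h3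
      simpa using (inv_mem_iff.mp (by simpa using h3))
    · refine ⟨u (QuotientGroup.mk g) ++ lg, ?_, ?_, ?_⟩
      · have h1 := hu1 (QuotientGroup.mk g)
        simp only [List.length_append]
        omega
      · intro x hx
        rcases List.mem_append.mp hx with h | h
        · exact hu2 _ x h
        · exact hlg2 x h
      · rw [List.prod_append, hlg3]
  haveI : Finite ↥S := hS.to_subtype
  have hBfin : B.Finite := by
    have hfin : {l : List ↥S | l.length ≤ n + L - 1}.Finite := List.finite_length_le ↥S _
    have himg : B ⊆ (fun l : List ↥S => (l.map Subtype.val).prod) ''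
        {l : List ↥S | l.length ≤ n + L - 1} := by
      rintro g ⟨-, l, hl1, hl2, hl3⟩
      refine ⟨l.pmap Subtype.mk hl2, ?_, ?_⟩
      · simpa using hl1
      · simp [List.map_pmap, hl3]
    exact (hfin.image _).subset himg
  have hprodfin : ((Set.univ : Set (G ⧸ H)) ×ˢ B).Finite :=
    Set.Finite.prod Set.finite_univ hBfin
  have hprodcard : ((Set.univ : Set (G ⧸ H)) ×ˢ B).ncard = L * B.ncard := by
    calc ((Set.univ : Set (G ⧸ H)) ×ˢ B).ncard
        = Nat.card ↥((Set.univ : Set (G ⧸ H)) ×ˢ B) := rfl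
      _ = Nat.card (↥(Set.univ : Set (G ⧸ H)) × ↥B) :=
          Nat.card_congr (Equiv.Set.prod _ _)
      _ = Nat.card ↥(Set.univ : Set (G ⧸ H)) * Nat.card ↥B := Nat.card_prod _ _
      _ = L * B.ncard := by
          congr 1
          calc Nat.card ↥(Set.univ : Set (G ⧸ H)) = Nat.card (G ⧸ H) :=
                Nat.card_congr (Equiv.Set.univ _)
            _ = L := rfl
  calc A.ncard = (f '' A).ncard := (Set.ncard_image_of_injective _ hinj).symm
    _ ≤ ((Set.univ : Set (G ⧸ H)) ×ˢ B).ncard := Set.ncard_le_ncard hsub hprodfin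
    _ = L * B.ncard := hprodcard
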